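/- Let n₁ and n₂ be coprime positive integers, let ξ₁ and ξ₂ be primitive roots of unity of degrees n₁ and n₂ respectively, and set M = ℚ(ξ₁). Then M(ξ₂)/M is a Galois extension and its Galois group Gal(M(ξ₂)/M) is isomorphic to (ℤ/n₂ℤ)ˣ. -/

import Mathlib

open Polynomial IsCyclotomicExtension Module

/-- Let `n₁` and `n₂` be coprime positive integers, let `ξ₁`, `ξ₂` be primitive roots of unity
of degrees `n₁`, `n₂` respectively, and set `M = ℚ(ξ₁)` (i.e. `M` is the `n₁`-st cyclotomic
extension of `ℚ`), and let `L = M(ξ₂)` (i.e. `L` is the `n₂`-nd cyclotomic extension of `M`).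
Then `L/M` is a Galois extension and `Gal(L/M) ≅ (ℤ/n₂ℤ)ˣ`. -/
theorem stmt_5 (n₁ n₂ : ℕ+) (hco : Nat.Coprime (n₁ : ℕ) (n₂ : ℕ))
    (M L : Type) [Field M] [Field L] [Algebra ℚ M] [Algebra M L]
    [IsCyclotomicExtension {(n₁ : ℕ)} ℚ M] [IsCyclotomicExtension {(n₂ : ℕ)} M L] :
    IsGalois M L ∧ Nonempty ((L ≃ₐ[M] L) ≃* (ZMod (n₂ : ℕ))ˣ) := by
  haveI : CharZero M := charZero_of_injective_algebraMap (algebraMap ℚ M).injective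
  haveI : CharZero L := charZero_of_injective_algebraMap (algebraMap M L).injective
  haveI : FiniteDimensional ℚ M := IsCyclotomicExtension.finiteDimensional {(n₁ : ℕ)} ℚ M
  haveI : FiniteDimensional M L := IsCyclotomicExtension.finiteDimensional {(n₂ : ℕ)} M L
  haveI : FiniteDimensional ℚ L := FiniteDimensional.trans ℚ M L
  -- primitive roots
  have hζ₂ := IsCyclotomicExtension.zeta_spec n₂ M L
  have hζ₁ := IsCyclotomicExtension.zeta_spec n₁ ℚ M
  have hζ₁L : IsPrimitiveRoot (algebraMap M L (IsCyclotomicExtension.zeta n₁ ℚ M)) (n₁ : ℕ) :=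
    hζ₁.map_of_injective (algebraMap M L).injective
  -- lower bound on finrank ℚ L
  have hlcm : Nat.lcm (n₁ : ℕ) (n₂ : ℕ) = (n₁ : ℕ) * (n₂ : ℕ) := Nat.Coprime.lcm_eq_mul hco
  have hpos : 0 < Nat.lcm (n₁ : ℕ) (n₂ : ℕ) := by
    rw [hlcm]; exact Nat.mul_pos n₁.pos n₂.pos
  have key := hζ₁L.lcm_totient_le_finrank hζ₂ (cyclotomic.irreducible_rat hpos)
  rw [hlcm, Nat.totient_mul hco] at key
  -- finrank ℚ L = finrank ℚ M * finrank M L, finrank ℚ M = φ(n₁)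
  have hM : finrank ℚ M = (n₁ : ℕ).totient :=
    IsCyclotomicExtension.finrank M (cyclotomic.irreducible_rat n₁.pos)
  have hmul : finrank ℚ M * finrank M L = finrank ℚ L := finrank_mul_finrank ℚ M L
  -- minpoly divides cyclotomic
  have hdvd : minpoly M (IsCyclotomicExtension.zeta n₂ M L) ∣ cyclotomic (n₂ : ℕ) M := by
    apply minpoly.dvd
    simpa [aeval_def, eval₂_eq_eval_map, map_cyclotomic] using
      (hζ₂.isRoot_cyclotomic n₂.pos).eq_zero
  have hfr : finrank M L = (minpoly M (IsCyclotomicExtension.zeta n₂ M L)).natDegree := by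
    rw [(hζ₂.powerBasis M).finrank, IsPrimitiveRoot.powerBasis_dim]
  have hcyc_ne : cyclotomic (n₂ : ℕ) M ≠ 0 := cyclotomic_ne_zero _ M
  have hub : finrank M L ≤ (n₂ : ℕ).totient := by
    rw [hfr, ← natDegree_cyclotomic (n₂ : ℕ) M]
    exact natDegree_le_of_dvd hdvd hcyc_ne
  have hlb : (n₂ : ℕ).totient ≤ finrank M L := by
    rw [← hmul, hM] at key
    exact Nat.le_of_mul_le_mul_left key (Nat.totient_pos.2 n₁.pos)
  have heq : finrank M L = (n₂ : ℕ).totient := le_antisymm hub hlb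
  -- minpoly = cyclotomic, hence irreducible
  have hminint : IsIntegral M (IsCyclotomicExtension.zeta n₂ M L) :=
    (IsCyclotomicExtension.integral {(n₂ : ℕ)} M L).isIntegral _
  have hpoly : cyclotomic (n₂ : ℕ) M = minpoly M (IsCyclotomicExtension.zeta n₂ M L) :=
    eq_of_monic_of_dvd_of_natDegree_le (minpoly.monic hminint) (cyclotomic.monic _ M)
      hdvd (by rw [natDegree_cyclotomic, ← heq, hfr])
  have hirr : Irreducible (cyclotomic (n₂ : ℕ) M) := by
    rw [hpoly]; exact minpoly.irreducible hminint
  exact ⟨IsCyclotomicExtension.isGalois {(n₂ : ℕ)} M L, ⟨IsCyclotomicExtension.autEquivPow L hirr⟩⟩
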